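/- arXiv:1101.4607 — 3 statements merged into one kernel-verified Lean document; each statement's English description precedes it below -/
import Mathlib

section
/- Let X be a random variable on an arbitrary measurable space and Y, Z real random variables whose conditional distribution functions F_{Y|X}(·|x) and F_{Z|X}(·|x) are continuous for almost every x. Define U = F_{Y|X}(Y|X) and V = F_{Z|X}(Z|X) (the partial copula transform). If Y ⫫ Z | X then U ⫫ V. -/
open MeasureTheory ProbabilityTheory Set Filter Topology
open scoped ENNReal

/-- The sublevel set of a continuous CDF has measure `min u 1`. -/
lemma cdf_level_measure (ρ : Measure ℝ) [IsProbabilityMeasure ρ] (f : ℝ → ℝ)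
    (hf : ∀ y, f y = (ρ (Set.Iic y)).toReal) (hc : Continuous f) (u : ℝ) :
    ρ {y | f y ≤ u} = ENNReal.ofReal (min u 1) := by
  have hmono : Monotone f := fun a b hab => by
    rw [hf, hf]
    exact ENNReal.toReal_mono (measure_ne_top ρ _) (measure_mono (Set.Iic_subset_Iic.2 hab))
  have hfle : ∀ y, f y ≤ 1 := fun y => by
    rw [hf]
    exact ENNReal.toReal_le_of_le_ofReal one_pos.le (by simpa using prob_le_one)
  by_cases hu1 : 1 ≤ u
  · have hall : {y | f y ≤ u} = univ := eq_univ_of_forall fun y => (hfle y).trans hu1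
    rw [hall, measure_univ, min_eq_right hu1, ENNReal.ofReal_one]
  push_neg at hu1
  have hmin : min u 1 = u := min_eq_left hu1.le
  rw [hmin]
  -- tendsto at top
  have htop : Tendsto (fun n : ℕ => f n) atTop (𝓝 1) := by
    have hU : ⋃ n : ℕ, Iic ((n : ℝ)) = univ := by
      ext x
      simpa using exists_nat_ge x
    have h1 : Tendsto (fun n : ℕ => ρ (Iic ((n : ℝ)))) atTop (𝓝 (ρ univ)) := by
      have := tendsto_measure_iUnion_atTop (μ := ρ) (s := fun n : ℕ => Iic ((n : ℝ)))
        (fun m n h => Iic_subset_Iic.2 (by exact_mod_cast h))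
      rwa [hU] at this
    rw [measure_univ] at h1
    have h2 := (ENNReal.tendsto_toReal (by simp : (1 : ℝ≥0∞) ≠ ⊤)).comp h1
    simpa [Function.comp_def, hf] using h2
  by_cases hA : {y | f y ≤ u}.Nonempty
  · -- bounded above
    obtain ⟨N, hN⟩ : ∃ N : ℕ, u < f N :=
      ((htop.eventually (eventually_gt_nhds hu1)).exists)
    have hbdd : BddAbove {y | f y ≤ u} := by
      refine ⟨N, fun y hy => ?_⟩
      by_contra h
      push_neg at h
      exact absurd (le_trans (hmono h.le) hy) (not_le.2 hN)
    set s := sSup {y | f y ≤ u} with hs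
    have hclosed : IsClosed {y | f y ≤ u} := isClosed_le hc continuous_const
    have hsmem : s ∈ {y | f y ≤ u} := hclosed.csSup_mem hA hbdd
    have hAeq : {y | f y ≤ u} = Iic s := by
      refine subset_antisymm (fun y hy => le_csSup hbdd hy) (fun y hy => ?_)
      exact le_trans (hmono hy) hsmem
    have hfs_ge : u ≤ f s := by
      have htd : Tendsto f (𝓝[>] s) (𝓝 (f s)) := (hc.tendsto s).mono_left nhdsWithin_le_nhds
      refine ge_of_tendsto htd ?_
      filter_upwards [self_mem_nhdsWithin] with y hy
      by_contra h
      push_neg at h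
      exact absurd (le_csSup hbdd h.le) (not_le.2 hy)
    have hfs : f s = u := le_antisymm hsmem hfs_ge
    rw [hAeq, ← hfs, hf s, ENNReal.ofReal_toReal (measure_ne_top ρ _)]
  · -- empty
    rw [not_nonempty_iff_eq_empty] at hA
    rw [hA, measure_empty]
    -- show u ≤ 0
    have hu0 : u ≤ 0 := by
      by_contra h
      push_neg at h
      have hbot : Tendsto (fun n : ℕ => f (-(n : ℝ))) atTop (𝓝 0) := by
        have hI : ⋂ n : ℕ, Iic (-(n : ℝ)) = ∅ := by
          ext x
          simp only [mem_iInter, mem_Iic, mem_empty_iff_false, iff_false, not_forall, not_le]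
          obtain ⟨n, hn⟩ := exists_nat_gt (-x)
          exact ⟨n, by linarith⟩
        have h1 : Tendsto (fun n : ℕ => ρ (Iic (-(n : ℝ)))) atTop (𝓝 (ρ (⋂ n : ℕ, Iic (-(n : ℝ))))) := by
          refine tendsto_measure_iInter_atTop (fun n => measurableSet_Iic.nullMeasurableSet) ?_ ⟨0, measure_ne_top ρ _⟩
          exact fun m n h => Iic_subset_Iic.2 (by exact_mod_cast neg_le_neg (Nat.cast_le.2 h))
        rw [hI, measure_empty] at h1
        have h2 := (ENNReal.tendsto_toReal (by simp : (0 : ℝ≥0∞) ≠ ⊤)).comp h1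
        simpa [Function.comp_def, hf] using h2
      obtain ⟨n, hn⟩ := (hbot.eventually (eventually_lt_nhds h)).exists
      have : (-(n : ℝ)) ∈ {y | f y ≤ u} := hn.le
      rw [hA] at this
      exact this
    rw [ENNReal.ofReal_eq_zero.2 hu0]

/-- Joint measurability of `(x, y) ↦ κ x (Iic y)`. -/
lemma measurable_kernel_Iic {E : Type*} [MeasurableSpace E] (κ : Kernel E ℝ) [IsSFiniteKernel κ] :
    Measurable fun p : E × ℝ => κ p.1 (Set.Iic p.2) := by
  have ht : MeasurableSet {q : (E × ℝ) × ℝ | q.2 ≤ q.1.2} :=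
    measurableSet_le measurable_snd measurable_fst.snd
  have h := Kernel.measurable_kernel_prodMk_left (κ := κ.comap Prod.fst measurable_fst) ht
  simpa [Kernel.comap_apply, Set.Iic_def] using h

/-- Partial copula transform: if the conditional distribution functions of `Y` and `Z` given
`X` are a.e. continuous and `Y ⫫ Z | X`, then `U = F_{Y|X}(Y|X)` and `V = F_{Z|X}(Z|X)`
are independent. -/
theorem partial_copula_stmt2
    {Ω E : Type*} [MeasurableSpace Ω] [StandardBorelSpace Ω] [MeasurableSpace E]
    (μ : Measure Ω) [IsProbabilityMeasure μ]
    (X : Ω → E) (Y Z : Ω → ℝ)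
    (hX : Measurable X) (hY : Measurable Y) (hZ : Measurable Z)
    (F G : E → ℝ → ℝ)
    (hF : ∀ x y, F x y = ((condDistrib Y X μ) x (Set.Iic y)).toReal)
    (hG : ∀ x z, G x z = ((condDistrib Z X μ) x (Set.Iic z)).toReal)
    (hcontF : ∀ᵐ x ∂(μ.map X), Continuous (F x))
    (hcontG : ∀ᵐ x ∂(μ.map X), Continuous (G x))
    (hCI : CondIndepFun (MeasurableSpace.comap X inferInstance) hX.comap_le Y Z μ) :
    IndepFun (fun ω => F (X ω) (Y ω)) (fun ω => G (X ω) (Z ω)) μ := by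
  set ν := μ.map X with hν
  set κ := condDistrib Y X μ with hκdef
  set η := condDistrib Z X μ with hηdef
  have hprobν : IsProbabilityMeasure ν := Measure.isProbabilityMeasure_map hX.aemeasurable
  -- joint measurability
  have hFm : Measurable fun p : E × ℝ => F p.1 p.2 := by
    have heq : (fun p : E × ℝ => F p.1 p.2) = fun p => (κ p.1 (Set.Iic p.2)).toReal :=
      funext fun p => hF p.1 p.2
    rw [heq]
    exact (measurable_kernel_Iic κ).ennreal_toReal
  have hGm : Measurable fun p : E × ℝ => G p.1 p.2 := by
    have heq : (fun p : E × ℝ => G p.1 p.2) = fun p => (η p.1 (Set.Iic p.2)).toReal :=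
      funext fun p => hG p.1 p.2
    rw [heq]
    exact (measurable_kernel_Iic η).ennreal_toReal
  have hU : Measurable fun ω => F (X ω) (Y ω) := hFm.comp (hX.prodMk hY)
  have hV : Measurable fun ω => G (X ω) (Z ω) := hGm.comp (hX.prodMk hZ)
  have hYZ : Measurable fun ω => (Y ω, Z ω) := hY.prodMk hZ
  -- compProd identity for (X, Y)
  have hXY : μ.map (fun ω => (X ω, Y ω)) = ν ⊗ₘ κ := by
    rw [hκdef, condDistrib, hν, ← Measure.fst_map_prodMk (X := X) hY]
    exact (Measure.disintegrate _ _).symm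
  -- CI key identity
  have hCI' := (condIndepFun_iff_condExp_inter_preimage_eq_mul hY hZ).mp hCI
  have key : ∀ (s : Set E) (t₁ t₂ : Set ℝ), MeasurableSet s → MeasurableSet t₁ → MeasurableSet t₂ →
      μ (X ⁻¹' s ∩ (Y ⁻¹' t₁ ∩ Z ⁻¹' t₂)) = ∫⁻ x in s, κ x t₁ * η x t₂ ∂ν := by
    intro s t₁ t₂ hs ht₁ ht₂
    have hD : MeasurableSet (Y ⁻¹' t₁ ∩ Z ⁻¹' t₂) := (hY ht₁).inter (hZ ht₂)
    have hXs : MeasurableSet[MeasurableSpace.comap X inferInstance] (X ⁻¹' s) := ⟨s, hs, rfl⟩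
    have h1 : ∫ ω in X ⁻¹' s,
          (μ⟦Y ⁻¹' t₁ ∩ Z ⁻¹' t₂ | MeasurableSpace.comap X inferInstance⟧) ω ∂μ
        = (μ (X ⁻¹' s ∩ (Y ⁻¹' t₁ ∩ Z ⁻¹' t₂))).toReal := by
      rw [setIntegral_condExp hX.comap_le ((integrable_const (μ := μ) (1 : ℝ)).indicator hD) hXs]
      rw [integral_indicator_const (μ := μ.restrict (X ⁻¹' s)) (1 : ℝ) hD,
        measureReal_def, Measure.restrict_apply hD, smul_eq_mul, mul_one, inter_comm]
    have h2 := condDistrib_ae_eq_condExp (μ := μ) hX hY ht₁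
    have h3 := condDistrib_ae_eq_condExp (μ := μ) hX hZ ht₂
    have h4 : (μ⟦Y ⁻¹' t₁ ∩ Z ⁻¹' t₂ | MeasurableSpace.comap X inferInstance⟧)
        =ᵐ[μ] fun ω => (κ (X ω) t₁).toReal * (η (X ω) t₂).toReal := by
      filter_upwards [hCI' t₁ t₂ ht₁ ht₂, h2, h3] with ω hω h2ω h3ω
      rw [hω, ← h2ω, ← h3ω]; rfl
    have h5 : ∫ ω in X ⁻¹' s,
          (μ⟦Y ⁻¹' t₁ ∩ Z ⁻¹' t₂ | MeasurableSpace.comap X inferInstance⟧) ω ∂μ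
        = ∫ ω in X ⁻¹' s, (κ (X ω) t₁).toReal * (η (X ω) t₂).toReal ∂μ :=
      integral_congr_ae (ae_restrict_of_ae h4)
    have hm1 : Measurable fun x => (κ x t₁).toReal * (η x t₂).toReal :=
      ((κ.measurable_coe ht₁).ennreal_toReal).mul ((η.measurable_coe ht₂).ennreal_toReal)
    have h6 : ∫ ω in X ⁻¹' s, (κ (X ω) t₁).toReal * (η (X ω) t₂).toReal ∂μ
        = ∫ x in s, (κ x t₁).toReal * (η x t₂).toReal ∂ν := by
      rw [hν, setIntegral_map hs hm1.aestronglyMeasurable hX.aemeasurable]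
    have h7 : ∫ x in s, (κ x t₁).toReal * (η x t₂).toReal ∂ν
        = (∫⁻ x in s, κ x t₁ * η x t₂ ∂ν).toReal := by
      simp_rw [← ENNReal.toReal_mul]
      refine integral_toReal ((κ.measurable_coe ht₁).mul (η.measurable_coe ht₂)).aemeasurable ?_
      refine Eventually.of_forall fun x => ?_
      exact ENNReal.mul_lt_top (measure_lt_top _ _) (measure_lt_top _ _)
    have hfin2 : ∫⁻ x in s, κ x t₁ * η x t₂ ∂ν ≠ ⊤ := by
      have hle : ∫⁻ x in s, κ x t₁ * η x t₂ ∂ν ≤ ∫⁻ _ in s, (1 : ℝ≥0∞) ∂ν :=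
        lintegral_mono fun x => mul_le_one' prob_le_one prob_le_one
      rw [setLIntegral_one] at hle
      exact ne_of_lt (lt_of_le_of_lt hle (measure_lt_top ν s))
    have hchain := h1.symm.trans ((h5.trans h6).trans h7)
    exact (ENNReal.toReal_eq_toReal_iff' (measure_ne_top μ _) hfin2).mp hchain
  -- compProd identity for (X, (Y, Z))
  have hXYZ : μ.map (fun ω => (X ω, (Y ω, Z ω))) = ν ⊗ₘ (κ ×ₖ η) := by
    refine ext_of_generate_finite
      (image2 (· ×ˢ ·) {s : Set E | MeasurableSet s}
        (image2 (· ×ˢ ·) {t : Set ℝ | MeasurableSet t} {t : Set ℝ | MeasurableSet t}))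
      ?_ ?_ ?_ ?_
    · exact (generateFrom_eq_prod MeasurableSpace.generateFrom_measurableSet
        generateFrom_prod isCountablySpanning_measurableSet
        ⟨fun _ => univ ×ˢ univ, fun _ => mem_image2_of_mem MeasurableSet.univ MeasurableSet.univ,
          by simp [Set.iUnion_const]⟩).symm
    · exact IsPiSystem.prod MeasurableSpace.isPiSystem_measurableSet (IsPiSystem.prod MeasurableSpace.isPiSystem_measurableSet MeasurableSpace.isPiSystem_measurableSet)
    · rintro _ ⟨s, hs, _, ⟨t₁, ht₁, t₂, ht₂, rfl⟩, rfl⟩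
      simp only [mem_setOf_eq] at hs ht₁ ht₂
      rw [Measure.map_apply (hX.prodMk hYZ) (hs.prod (ht₁.prod ht₂)),
        Measure.compProd_apply_prod hs (ht₁.prod ht₂)]
      have hpre : (fun ω => (X ω, (Y ω, Z ω))) ⁻¹' s ×ˢ (t₁ ×ˢ t₂)
          = X ⁻¹' s ∩ (Y ⁻¹' t₁ ∩ Z ⁻¹' t₂) := by
        ext ω; simp [Set.mem_prod, and_assoc]
      rw [hpre, key s t₁ t₂ hs ht₁ ht₂]
      refine setLIntegral_congr_fun hs (fun x _ => ?_)
      rw [Kernel.prod_apply, Measure.prod_prod]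
    · rw [Measure.map_apply (hX.prodMk hYZ) MeasurableSet.univ, preimage_univ,
        Measure.compProd_apply_univ, hν, Measure.map_apply hX MeasurableSet.univ, preimage_univ]
  -- marginal values
  have hmargY : ∀ u : ℝ, μ ((fun ω => F (X ω) (Y ω)) ⁻¹' Iic u) = ENNReal.ofReal (min u 1) := by
    intro u
    have hset : MeasurableSet {p : E × ℝ | F p.1 p.2 ≤ u} := hFm measurableSet_Iic
    have h1 : (fun ω => F (X ω) (Y ω)) ⁻¹' Iic u
        = (fun ω => (X ω, Y ω)) ⁻¹' {p : E × ℝ | F p.1 p.2 ≤ u} := rfl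
    rw [h1, ← Measure.map_apply (hX.prodMk hY) hset, hXY, Measure.compProd_apply hset]
    have h2 : ∀ᵐ x ∂ν, κ x (Prod.mk x ⁻¹' {p : E × ℝ | F p.1 p.2 ≤ u})
        = ENNReal.ofReal (min u 1) := by
      filter_upwards [hcontF] with x hx
      exact cdf_level_measure (κ x) (F x) (fun y => hF x y) hx u
    rw [lintegral_congr_ae h2, lintegral_const, measure_univ, mul_one]
  have hmargZ : ∀ v : ℝ, μ ((fun ω => G (X ω) (Z ω)) ⁻¹' Iic v) = ENNReal.ofReal (min v 1) := by
    intro v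
    have hXZ : μ.map (fun ω => (X ω, Z ω)) = ν ⊗ₘ η := by
      rw [hηdef, condDistrib, hν, ← Measure.fst_map_prodMk (X := X) hZ]
      exact (Measure.disintegrate _ _).symm
    have hset : MeasurableSet {p : E × ℝ | G p.1 p.2 ≤ v} := hGm measurableSet_Iic
    have h1 : (fun ω => G (X ω) (Z ω)) ⁻¹' Iic v
        = (fun ω => (X ω, Z ω)) ⁻¹' {p : E × ℝ | G p.1 p.2 ≤ v} := rfl
    rw [h1, ← Measure.map_apply (hX.prodMk hZ) hset, hXZ, Measure.compProd_apply hset]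
    have h2 : ∀ᵐ x ∂ν, η x (Prod.mk x ⁻¹' {p : E × ℝ | G p.1 p.2 ≤ v})
        = ENNReal.ofReal (min v 1) := by
      filter_upwards [hcontG] with x hx
      exact cdf_level_measure (η x) (G x) (fun z => hG x z) hx v
    rw [lintegral_congr_ae h2, lintegral_const, measure_univ, mul_one]
  have hUVj : ∀ u v : ℝ,
      μ ((fun ω => F (X ω) (Y ω)) ⁻¹' Iic u ∩ (fun ω => G (X ω) (Z ω)) ⁻¹' Iic v)
      = ENNReal.ofReal (min u 1) * ENNReal.ofReal (min v 1) := by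
    intro u v
    have h1m : Measurable fun p : E × (ℝ × ℝ) => F p.1 p.2.1 :=
      hFm.comp (measurable_fst.prodMk measurable_snd.fst)
    have h2m : Measurable fun p : E × (ℝ × ℝ) => G p.1 p.2.2 :=
      hGm.comp (measurable_fst.prodMk measurable_snd.snd)
    have hset : MeasurableSet {p : E × (ℝ × ℝ) | F p.1 p.2.1 ≤ u ∧ G p.1 p.2.2 ≤ v} :=
      (h1m measurableSet_Iic).inter (h2m measurableSet_Iic)
    have h1 : (fun ω => F (X ω) (Y ω)) ⁻¹' Iic u ∩ (fun ω => G (X ω) (Z ω)) ⁻¹' Iic v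
        = (fun ω => (X ω, (Y ω, Z ω))) ⁻¹'
          {p : E × (ℝ × ℝ) | F p.1 p.2.1 ≤ u ∧ G p.1 p.2.2 ≤ v} := rfl
    rw [h1, ← Measure.map_apply (hX.prodMk hYZ) hset, hXYZ, Measure.compProd_apply hset]
    have h2 : ∀ᵐ x ∂ν, (κ ×ₖ η) x
          (Prod.mk x ⁻¹' {p : E × (ℝ × ℝ) | F p.1 p.2.1 ≤ u ∧ G p.1 p.2.2 ≤ v})
        = ENNReal.ofReal (min u 1) * ENNReal.ofReal (min v 1) := by
      filter_upwards [hcontF, hcontG] with x hxF hxG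
      have hpre : (Prod.mk x ⁻¹' {p : E × (ℝ × ℝ) | F p.1 p.2.1 ≤ u ∧ G p.1 p.2.2 ≤ v})
          = {y | F x y ≤ u} ×ˢ {z | G x z ≤ v} := rfl
      rw [hpre, Kernel.prod_apply, Measure.prod_prod,
        cdf_level_measure (κ x) (F x) (fun y => hF x y) hxF u,
        cdf_level_measure (η x) (G x) (fun z => hG x z) hxG v]
    rw [lintegral_congr_ae h2, lintegral_const, measure_univ, mul_one]
  -- conclusion
  rw [indepFun_iff_map_prod_eq_prod_map_map hU.aemeasurable hV.aemeasurable]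
  haveI hPU : IsProbabilityMeasure (μ.map fun ω => F (X ω) (Y ω)) :=
    Measure.isProbabilityMeasure_map hU.aemeasurable
  haveI hPV : IsProbabilityMeasure (μ.map fun ω => G (X ω) (Z ω)) :=
    Measure.isProbabilityMeasure_map hV.aemeasurable
  have hIicgen : MeasurableSpace.generateFrom (range (Iic : ℝ → Set ℝ))
      = (inferInstance : MeasurableSpace ℝ) := by
    rw [BorelSpace.measurable_eq (α := ℝ)]
    exact (borel_eq_generateFrom_Iic ℝ).symm
  have hspan : IsCountablySpanning (range (Iic : ℝ → Set ℝ)) :=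
    ⟨fun n => Iic (n : ℝ), fun n => mem_range_self _, by ext x; simpa using exists_nat_ge x⟩
  refine ext_of_generate_finite (image2 (· ×ˢ ·) (range Iic) (range Iic))
    (generateFrom_eq_prod hIicgen hIicgen hspan hspan).symm ?_ ?_ ?_
  · refine IsPiSystem.prod ?_ ?_ <;>
    · rintro _ ⟨a, rfl⟩ _ ⟨b, rfl⟩ -
      exact ⟨min a b, Iic_inter_Iic.symm⟩
  · rintro _ ⟨_, ⟨a, rfl⟩, _, ⟨b, rfl⟩, rfl⟩
    rw [Measure.map_apply (hU.prodMk hV) (measurableSet_Iic.prod measurableSet_Iic),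
      mk_preimage_prod, Measure.prod_prod,
      Measure.map_apply hU measurableSet_Iic, Measure.map_apply hV measurableSet_Iic,
      hUVj a b, hmargY a, hmargZ b]
  · rw [Measure.map_apply (hU.prodMk hV) MeasurableSet.univ, preimage_univ, measure_univ,
      measure_univ]
end

section
/- If (Y_1, Z_1), ..., (Y_4, Z_4) are i.i.d. copies of a pair (Y, Z) of real random variables with Y ⫫ Z, then τ*(Y, Z) := E[sign(a(Y_1, Y_2, Y_3, Y_4)) sign(a(Z_1, Z_2, Z_3, Z_4))] = 0, where a(z_1, z_2, z_3, z_4) = |z_1 − z_2| + |z_3 − z_4| − |z_1 − z_3| − |z_2 − z_4| and sign is the sign function. -/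
open MeasureTheory ProbabilityTheory

/-- Bergsma's kernel `a(z₁,z₂,z₃,z₄) = |z₁-z₂| + |z₃-z₄| - |z₁-z₃| - |z₂-z₄|`. -/
def kernelA (z₁ z₂ z₃ z₄ : ℝ) : ℝ :=
  |z₁ - z₂| + |z₃ - z₄| - |z₁ - z₃| - |z₂ - z₄|

lemma kernelA_swap (z₁ z₂ z₃ z₄ : ℝ) : kernelA z₁ z₃ z₂ z₄ = -kernelA z₁ z₂ z₃ z₄ := by
  unfold kernelA; ring

@[fun_prop] lemma measurable_realSign : Measurable Real.sign := by
  unfold Real.sign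
  exact Measurable.ite (measurableSet_lt measurable_id measurable_const) measurable_const
    (Measurable.ite (measurableSet_lt measurable_const measurable_id) measurable_const
      measurable_const)

lemma measurable_signKernel : Measurable (fun y : Fin 4 → ℝ =>
    Real.sign (kernelA (y 0) (y 1) (y 2) (y 3))) := by
  apply measurable_realSign.comp
  unfold kernelA
  fun_prop

/-- The integral of `sign ∘ kernelA` over any product of four copies of a probability
measure vanishes, by antisymmetry of `kernelA` under swapping the middle two arguments. -/
lemma integral_signKernel_pi (ν : Measure ℝ) [IsProbabilityMeasure ν] :
    ∫ y : Fin 4 → ℝ, Real.sign (kernelA (y 0) (y 1) (y 2) (y 3))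
      ∂(Measure.pi fun _ : Fin 4 => ν) = 0 := by
  set π : Measure (Fin 4 → ℝ) := Measure.pi fun _ : Fin 4 => ν
  set g : (Fin 4 → ℝ) → ℝ := fun y => Real.sign (kernelA (y 0) (y 1) (y 2) (y 3)) with hg
  have hmp := MeasureTheory.measurePreserving_piCongrLeft (fun _ : Fin 4 => ν)
    (Equiv.swap (1 : Fin 4) 2)
  have h1 : ∫ y, g y ∂π =
      ∫ y, g ((MeasurableEquiv.piCongrLeft (fun _ : Fin 4 => ℝ)
        (Equiv.swap (1 : Fin 4) 2)) y) ∂π :=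
    (hmp.integral_comp (MeasurableEquiv.piCongrLeft (fun _ : Fin 4 => ℝ)
      (Equiv.swap (1 : Fin 4) 2)).measurableEmbedding g).symm
  have h2 : ∀ y : Fin 4 → ℝ,
      g ((MeasurableEquiv.piCongrLeft (fun _ : Fin 4 => ℝ) (Equiv.swap (1 : Fin 4) 2)) y)
        = -g y := by
    intro y
    have hv : ∀ i : Fin 4,
        (MeasurableEquiv.piCongrLeft (fun _ : Fin 4 => ℝ) (Equiv.swap (1 : Fin 4) 2)) y i
          = y (Equiv.swap (1 : Fin 4) 2 i) := by
      intro i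
      have := MeasurableEquiv.piCongrLeft_apply_apply (Equiv.swap (1 : Fin 4) 2)
        (β := fun _ : Fin 4 => ℝ) y (Equiv.swap (1 : Fin 4) 2 i)
      rwa [Equiv.swap_apply_self] at this
    simp only [hg, hv]
    rw [show Equiv.swap (1 : Fin 4) 2 0 = 0 by decide,
      show Equiv.swap (1 : Fin 4) 2 1 = 2 by decide,
      show Equiv.swap (1 : Fin 4) 2 2 = 1 by decide,
      show Equiv.swap (1 : Fin 4) 2 3 = 3 by decide,
      kernelA_swap, Real.sign_neg]
  have key : ∫ y, g y ∂π = -∫ y, g y ∂π := by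
    nth_rewrite 1 [h1]
    simp only [h2]
    exact integral_neg g
  linarith

/-- If `(Y₁,Z₁),…,(Y₄,Z₄)` are i.i.d. copies of `(Y,Z)` with `Y ⫫ Z`, then
`τ*(Y,Z) = E[sign(a(Y₁,Y₂,Y₃,Y₄)) sign(a(Z₁,Z₂,Z₃,Z₄))] = 0`. -/
theorem partial_copula_stmt10
    {Ω Ω₀ : Type*} [MeasurableSpace Ω] [MeasurableSpace Ω₀]
    (μ : Measure Ω) [IsProbabilityMeasure μ]
    (μ₀ : Measure Ω₀) [IsProbabilityMeasure μ₀]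
    (Y Z : Ω₀ → ℝ) (hY : Measurable Y) (hZ : Measurable Z)
    (hYZ : IndepFun Y Z μ₀)
    (Ys Zs : Fin 4 → Ω → ℝ) (hYs : ∀ i, Measurable (Ys i)) (hZs : ∀ i, Measurable (Zs i))
    (hindep : iIndepFun (fun i ω => (Ys i ω, Zs i ω)) μ)
    (hident : ∀ i, μ.map (fun ω => (Ys i ω, Zs i ω)) = μ₀.map (fun ω => (Y ω, Z ω))) :
    ∫ ω, Real.sign (kernelA (Ys 0 ω) (Ys 1 ω) (Ys 2 ω) (Ys 3 ω)) *
        Real.sign (kernelA (Zs 0 ω) (Zs 1 ω) (Zs 2 ω) (Zs 3 ω)) ∂μ = 0 := by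
  set νY : Measure ℝ := μ₀.map Y with hνY
  set νZ : Measure ℝ := μ₀.map Z with hνZ
  set ν : Measure (ℝ × ℝ) := μ₀.map (fun ω => (Y ω, Z ω)) with hν
  have hmeas_pair : ∀ i, Measurable (fun ω => (Ys i ω, Zs i ω)) :=
    fun i => (hYs i).prodMk (hZs i)
  haveI : IsProbabilityMeasure ν := Measure.isProbabilityMeasure_map (hY.prodMk hZ).aemeasurable
  haveI : IsProbabilityMeasure νY := Measure.isProbabilityMeasure_map hY.aemeasurable
  haveI : IsProbabilityMeasure νZ := Measure.isProbabilityMeasure_map hZ.aemeasurable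
  -- the joint law of the four pairs is the 4-fold product of ν
  have hmeasV : Measurable (fun ω => (fun i : Fin 4 => (Ys i ω, Zs i ω))) :=
    measurable_pi_lambda _ (fun i => hmeas_pair i)
  have hjoint : μ.map (fun ω => (fun i : Fin 4 => (Ys i ω, Zs i ω)))
      = Measure.pi (fun _ : Fin 4 => ν) := by
    refine (Measure.pi_eq (μ := fun _ : Fin 4 => ν) fun s hs => ?_).symm
    rw [Measure.map_apply hmeasV (MeasurableSet.univ_pi hs)]
    have hpre : (fun ω => (fun i : Fin 4 => (Ys i ω, Zs i ω))) ⁻¹' (Set.univ.pi s)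
        = ⋂ i ∈ Finset.univ, (fun ω => (Ys i ω, Zs i ω)) ⁻¹' (s i) := by
      ext ω; simp [Set.mem_pi]
    rw [hpre, hindep.measure_inter_preimage_eq_mul Finset.univ (fun i _ => hs i)]
    refine Finset.prod_congr rfl fun i _ => ?_
    rw [← Measure.map_apply (hmeas_pair i) (hs i), hident i]
  -- ν factorizes
  have hνprod : ν = νY.prod νZ :=
    (indepFun_iff_map_prod_eq_prod_map_map hY.aemeasurable hZ.aemeasurable).mp hYZ
  set f : (Fin 4 → ℝ) → ℝ := fun y => Real.sign (kernelA (y 0) (y 1) (y 2) (y 3)) with hf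
  set G : (Fin 4 → ℝ × ℝ) → ℝ := fun p => f (fun i => (p i).1) * f (fun i => (p i).2)
    with hG
  have hGmeas : Measurable G := by
    rw [hG, hf]
    unfold kernelA
    fun_prop
  have h1 : ∫ ω, Real.sign (kernelA (Ys 0 ω) (Ys 1 ω) (Ys 2 ω) (Ys 3 ω)) *
        Real.sign (kernelA (Zs 0 ω) (Zs 1 ω) (Zs 2 ω) (Zs 3 ω)) ∂μ
      = ∫ p, G p ∂(Measure.pi fun _ : Fin 4 => ν) := by
    rw [← hjoint, integral_map hmeasV.aemeasurable hGmeas.aestronglyMeasurable]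
  rw [h1, hνprod]
  -- split via the measurable equivalence (Fin 4 → ℝ×ℝ) ≃ (Fin 4 → ℝ) × (Fin 4 → ℝ)
  have hmp := MeasureTheory.measurePreserving_arrowProdEquivProdArrow ℝ ℝ (Fin 4)
    (fun _ => νY) (fun _ => νZ)
  have h2 : ∫ p, G p ∂(Measure.pi fun _ : Fin 4 => νY.prod νZ)
      = ∫ q : (Fin 4 → ℝ) × (Fin 4 → ℝ), f q.1 * f q.2
          ∂((Measure.pi fun _ : Fin 4 => νY).prod (Measure.pi fun _ : Fin 4 => νZ)) := by
    rw [← hmp.integral_comp (MeasurableEquiv.arrowProdEquivProdArrow ℝ ℝ (Fin 4)).measurableEmbedding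
      (fun q : (Fin 4 → ℝ) × (Fin 4 → ℝ) => f q.1 * f q.2)]
    rfl
  rw [h2, integral_prod_mul, integral_signKernel_pi νZ, mul_zero]
end

section
/- Let Y, Z be real random variables and X arbitrary, with the conditional distribution functions F_{Y|X}(·|x) continuous for a.e. x, and set U = F_{Y|X}(Y|X). For any square-integrable functions s, t of r arguments with zero means under the uniform product measure, if Y ⫫ Z | X then the statistic θ(U, V) := E[s(U_1, ..., U_r) t(V_1, ..., V_r)] computed on i.i.d. copies of the partial copula transforms (U, V) equals zero. -/
open MeasureTheory ProbabilityTheory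

open Set Filter

lemma unif_Iic (a : ℝ) :
    (volume.restrict (Set.Icc (0:ℝ) 1)) (Set.Iic a) = ENNReal.ofReal (min a 1) := by
  rw [Measure.restrict_apply measurableSet_Iic]
  have : Set.Iic a ∩ Set.Icc (0:ℝ) 1 = Set.Icc 0 (min a 1) := by
    ext x
    simp only [Set.mem_inter_iff, Set.mem_Iic, Set.mem_Icc, le_min_iff]
    constructor
    · rintro ⟨h1, h2, h3⟩; exact ⟨h2, h1, h3⟩
    · rintro ⟨h1, h2, h3⟩; exact ⟨h2, h1, h3⟩
  rw [this, Real.volume_Icc, sub_zero]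

lemma pit (ρ : Measure ℝ) [IsProbabilityMeasure ρ]
    (hc : Continuous (fun y => (ρ (Set.Iic y)).toReal)) (a : ℝ) :
    ρ {y | (ρ (Set.Iic y)).toReal ≤ a} = ENNReal.ofReal (min a 1) := by
  have hfeq : (fun y => (ρ (Set.Iic y)).toReal) = fun y => cdf ρ y := by
    funext y; rw [cdf_eq_real, measureReal_def]
  rw [hfeq] at hc
  have hset : {y | (ρ (Set.Iic y)).toReal ≤ a} = {y | cdf ρ y ≤ a} := by
    ext y; rw [Set.mem_setOf_eq, Set.mem_setOf_eq, cdf_eq_real, measureReal_def]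
  rw [hset]
  set f : ℝ → ℝ := fun y => cdf ρ y with hf
  rcases lt_or_ge a 0 with ha | ha
  · have : {y | f y ≤ a} = ∅ := by
      ext y; simp only [Set.mem_setOf_eq, Set.mem_empty_iff_false, iff_false, not_le]
      exact lt_of_lt_of_le ha (cdf_nonneg ρ y)
    rw [this]
    simp [ENNReal.ofReal_eq_zero, min_le_iff, ha.le, ENNReal.ofReal_of_nonpos ha.le]
  rcases le_or_gt 1 a with ha1 | ha1
  · have : {y | f y ≤ a} = Set.univ := by
      ext y; simp only [Set.mem_setOf_eq, Set.mem_univ, iff_true]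
      exact le_trans (cdf_le_one ρ y) ha1
    rw [this, measure_univ, min_eq_right ha1, ENNReal.ofReal_one]
  -- 0 ≤ a < 1
  rw [min_eq_left ha1.le]
  by_cases hS : ({y | f y ≤ a}).Nonempty
  · -- bounded above
    have hbdd : BddAbove {y | f y ≤ a} := by
      obtain ⟨M, hM⟩ : ∃ M, ∀ y ≥ M, a < f y := by
        have := (tendsto_cdf_atTop ρ).eventually_const_lt ha1
        rw [eventually_atTop] at this
        obtain ⟨M, hM⟩ := this
        exact ⟨M, fun y hy => hM y hy⟩
      refine ⟨M, fun y hy => ?_⟩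
      by_contra h
      push_neg at h
      exact absurd hy (not_le.mpr (hM y h.le))
    have hclosed : IsClosed {y | f y ≤ a} := isClosed_le hc continuous_const
    set c := sSup {y | f y ≤ a} with hc'
    have hcmem : c ∈ {y | f y ≤ a} := hclosed.csSup_mem hS hbdd
    have hfca : f c ≤ a := hcmem
    have hafc : a ≤ f c := by
      have h1 : Filter.Tendsto (fun n : ℕ => f (c + 1 / (n + 1))) atTop (nhds (f c)) := by
        refine (hc.tendsto c).comp ?_
        have : Filter.Tendsto (fun n : ℕ => c + 1 / ((n:ℝ) + 1)) atTop (nhds (c + 0)) :=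
          tendsto_const_nhds.add tendsto_one_div_add_atTop_nhds_zero_nat
        simpa using this
      refine le_of_tendsto_of_tendsto tendsto_const_nhds h1 ?_
      refine Filter.Eventually.of_forall fun n => ?_
      have hgt : c < c + 1 / ((n:ℝ) + 1) := by
          have : (0:ℝ) < 1 / ((n:ℝ) + 1) := by positivity
          linarith
      by_contra h
      push_neg at h
      exact absurd (le_csSup hbdd h.le) (not_le.mpr hgt)
    have hSIic : {y | f y ≤ a} = Set.Iic c := by
      ext y
      simp only [Set.mem_setOf_eq, Set.mem_Iic]
      constructor
      · intro hy; exact le_csSup hbdd hy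
      · intro hy
        calc f y ≤ f c := monotone_cdf ρ hy
          _ ≤ a := hfca
    rw [hSIic, ← ofReal_cdf ρ c]
    have : (cdf ρ) c = a := le_antisymm hfca hafc
    rw [this]
  · rw [Set.not_nonempty_iff_eq_empty] at hS
    rw [hS, measure_empty]
    have ha0 : a = 0 := by
      by_contra h
      have hapos : 0 < a := lt_of_le_of_ne ha (Ne.symm h)
      have := (tendsto_cdf_atBot ρ).eventually_lt_const hapos
      rw [eventually_atBot] at this
      obtain ⟨M, hM⟩ := this
      have : M ∈ {y | f y ≤ a} := (hM M le_rfl).le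
      rw [hS] at this
      exact this
    rw [ha0]
    simp

lemma kernel_cdf_jointly_measurable {E : Type*} [MeasurableSpace E]
    (κ : Kernel E ℝ) [IsMarkovKernel κ] :
    Measurable (fun p : E × ℝ => (κ p.1 (Set.Iic p.2)).toReal) := by
  have key : ∀ p : E × ℝ, κ p.1 (Set.Iic p.2)
      = ⨅ q : ℚ, κ p.1 (if p.2 ≤ (q:ℝ) then Set.Iic (q:ℝ) else Set.univ) := by
    intro ⟨x, y⟩
    have hiInter : (⋂ q : ℚ, (if y ≤ (q:ℝ) then Set.Iic (q:ℝ) else Set.univ)) = Set.Iic y := by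
      apply Set.Subset.antisymm
      · intro z hz
        simp only [Set.mem_iInter] at hz
        by_contra h
        rw [Set.mem_Iic, not_le] at h
        obtain ⟨q, hq1, hq2⟩ := exists_rat_btwn h
        have := hz q
        rw [if_pos hq1.le] at this
        exact absurd this (not_le.mpr hq2)
      · intro z hz
        simp only [Set.mem_iInter]
        intro q
        split
        · exact le_trans hz (by assumption)
        · trivial
      
    rw [← hiInter]
    refine Directed.measure_iInter (fun q => ?_) ?_ ⟨0, measure_ne_top _ _⟩
    · split
      · exact measurableSet_Iic.nullMeasurableSet
      · exact MeasurableSet.univ.nullMeasurableSet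
    · intro q q'
      by_cases h1 : y ≤ (q:ℝ) <;> by_cases h2 : y ≤ (q':ℝ)
      · have hm : y ≤ ((min q q' : ℚ):ℝ) := by push_cast; exact le_min h1 h2
        refine ⟨min q q', ?_, ?_⟩ <;> simp only
        · rw [if_pos h1, if_pos hm]
          refine Set.Iic_subset_Iic.mpr (by push_cast; simp [min_le_left])
        · rw [if_pos h2, if_pos hm]
          refine Set.Iic_subset_Iic.mpr (by push_cast; simp [min_le_right])
      · exact ⟨q, by simp, by simp [if_neg h2]⟩
      · exact ⟨q', by simp [if_neg h1], by simp⟩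
      · exact ⟨q, by simp, by simp [if_neg h1, if_neg h2]⟩
  have : (fun p : E × ℝ => (κ p.1 (Set.Iic p.2)))
      = fun p => ⨅ q : ℚ, κ p.1 (if p.2 ≤ (q:ℝ) then Set.Iic (q:ℝ) else Set.univ) :=
    funext key
  refine Measurable.ennreal_toReal ?_
  rw [this]
  refine Measurable.iInf fun q => ?_
  have : (fun p : E × ℝ => κ p.1 (if p.2 ≤ (q:ℝ) then Set.Iic (q:ℝ) else Set.univ))
      = fun p : E × ℝ => if p.2 ≤ (q:ℝ) then κ p.1 (Set.Iic (q:ℝ)) else κ p.1 Set.univ := by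
    funext p
    split <;> rfl
  rw [this]
  refine Measurable.ite ?_ ?_ ?_
  · exact measurable_snd measurableSet_Iic
  · exact (κ.measurable_coe measurableSet_Iic).comp measurable_fst
  · exact (κ.measurable_coe MeasurableSet.univ).comp measurable_fst

lemma partial_copula_law {Ω E : Type*} [MeasurableSpace Ω] [StandardBorelSpace Ω]
    [MeasurableSpace E]
    (μ : Measure Ω) [IsProbabilityMeasure μ]
    (X : Ω → E) (Y Z : Ω → ℝ)
    (hX : Measurable X) (hY : Measurable Y) (hZ : Measurable Z)
    (F G : E → ℝ → ℝ)
    (hF : ∀ x y, F x y = ((condDistrib Y X μ) x (Set.Iic y)).toReal)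
    (hG : ∀ x z, G x z = ((condDistrib Z X μ) x (Set.Iic z)).toReal)
    (hcontF : ∀ᵐ x ∂(μ.map X), Continuous (F x))
    (hcontG : ∀ᵐ x ∂(μ.map X), Continuous (G x))
    (hCI : CondIndepFun (MeasurableSpace.comap X inferInstance) hX.comap_le Y Z μ) :
    μ.map (fun ω => (F (X ω) (Y ω), G (X ω) (Z ω)))
      = (volume.restrict (Set.Icc 0 1)).prod (volume.restrict (Set.Icc 0 1)) := by
  set unif : Measure ℝ := volume.restrict (Set.Icc 0 1) with hunif
  haveI hunifP : IsProbabilityMeasure unif := by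
    constructor
    rw [hunif, Measure.restrict_apply_univ, Real.volume_Icc]
    norm_num
  set κY := condDistrib Y X μ with hκY
  set κZ := condDistrib Z X μ with hκZ
  set W : Ω → ℝ × ℝ := fun ω => (Y ω, Z ω) with hW
  have hWm : Measurable W := hY.prodMk hZ
  set κW := condDistrib W X μ with hκW
  -- joint measurability of F and G
  have hFeq : (fun p : E × ℝ => F p.1 p.2) = fun p => (κY p.1 (Set.Iic p.2)).toReal :=
    funext fun p => hF p.1 p.2
  have hGeq : (fun p : E × ℝ => G p.1 p.2) = fun p => (κZ p.1 (Set.Iic p.2)).toReal :=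
    funext fun p => hG p.1 p.2
  have hFmeas : Measurable (fun p : E × ℝ => F p.1 p.2) := by
    rw [hFeq]; exact kernel_cdf_jointly_measurable κY
  have hGmeas : Measurable (fun p : E × ℝ => G p.1 p.2) := by
    rw [hGeq]; exact kernel_cdf_jointly_measurable κZ
  have hU : Measurable (fun ω => F (X ω) (Y ω)) := hFmeas.comp (hX.prodMk hY)
  have hV : Measurable (fun ω => G (X ω) (Z ω)) := hGmeas.comp (hX.prodMk hZ)
  -- step A1/A2: rectangle identity, a.e. in x
  have hA1 : ∀ q r : ℚ, ∀ᵐ x ∂(μ.map X),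
      κW x (Set.Iic (q:ℝ) ×ˢ Set.Iic (r:ℝ)) = κY x (Set.Iic (q:ℝ)) * κZ x (Set.Iic (r:ℝ)) := by
    intro q r
    have hSmeas : MeasurableSet (Set.Iic (q:ℝ) ×ˢ Set.Iic (r:ℝ)) :=
      measurableSet_Iic.prod measurableSet_Iic
    have h1 := condDistrib_ae_eq_condExp (μ := μ) hX hWm hSmeas
    have hpre : W ⁻¹' (Set.Iic (q:ℝ) ×ˢ Set.Iic (r:ℝ))
        = Y ⁻¹' Set.Iic (q:ℝ) ∩ Z ⁻¹' Set.Iic (r:ℝ) := Set.mk_preimage_prod Y Z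
    rw [hpre] at h1
    have h2 := (condIndepFun_iff_condExp_inter_preimage_eq_mul hY hZ).mp hCI
      (Set.Iic (q:ℝ)) (Set.Iic (r:ℝ)) measurableSet_Iic measurableSet_Iic
    have h3 := condDistrib_ae_eq_condExp (μ := μ) hX hY (measurableSet_Iic (a := (q:ℝ)))
    have h4 := condDistrib_ae_eq_condExp (μ := μ) hX hZ (measurableSet_Iic (a := (r:ℝ)))
    have hae : ∀ᵐ ω ∂μ, (κW (X ω) (Set.Iic (q:ℝ) ×ˢ Set.Iic (r:ℝ))).toReal
        = (κY (X ω) (Set.Iic (q:ℝ))).toReal * (κZ (X ω) (Set.Iic (r:ℝ))).toReal := by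
      filter_upwards [h1, h2, h3, h4] with ω e1 e2 e3 e4
      simp only [← measureReal_def]
      rw [e1, e2, ← e3, ← e4]
    have hmeasset : MeasurableSet {x : E | (κW x (Set.Iic (q:ℝ) ×ˢ Set.Iic (r:ℝ))).toReal
        = (κY x (Set.Iic (q:ℝ))).toReal * (κZ x (Set.Iic (r:ℝ))).toReal} := by
      refine measurableSet_eq_fun ?_ ?_
      · exact (Kernel.measurable_coe κW hSmeas).ennreal_toReal
      · exact ((Kernel.measurable_coe κY measurableSet_Iic).ennreal_toReal).mul
          ((Kernel.measurable_coe κZ measurableSet_Iic).ennreal_toReal)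
    have := (ae_map_iff hX.aemeasurable hmeasset).mpr hae
    filter_upwards [this] with x hx
    have h5 : (κW x (Set.Iic (q:ℝ) ×ˢ Set.Iic (r:ℝ))).toReal
        = (κY x (Set.Iic (q:ℝ)) * κZ x (Set.Iic (r:ℝ))).toReal := by
      rw [ENNReal.toReal_mul]; exact hx
    exact (ENNReal.toReal_eq_toReal_iff' (measure_ne_top _ _)
      (ENNReal.mul_ne_top (measure_ne_top _ _) (measure_ne_top _ _))).mp h5
  -- step A3: a.e. product form of the conditional distribution of (Y, Z)
  have hA : ∀ᵐ x ∂(μ.map X), κW x = (κY x).prod (κZ x) := by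
    have hall : ∀ᵐ x ∂(μ.map X), ∀ q r : ℚ,
        κW x (Set.Iic (q:ℝ) ×ˢ Set.Iic (r:ℝ)) = κY x (Set.Iic (q:ℝ)) * κZ x (Set.Iic (r:ℝ)) :=
      ae_all_iff.mpr fun q => ae_all_iff.mpr fun r => hA1 q r
    filter_upwards [hall] with x hx
    haveI : IsProbabilityMeasure ((κY x).prod (κZ x)) := by infer_instance
    have hgenQ : MeasurableSpace.generateFrom (⋃ q : ℚ, {Set.Iic (q:ℝ)})
        = Real.measurableSpace := by
      rw [← Real.borel_eq_generateFrom_Iic_rat]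
      exact (BorelSpace.measurable_eq (α := ℝ)).symm
    have hcsQ : IsCountablySpanning (⋃ q : ℚ, {Set.Iic (q:ℝ)}) := by
      refine ⟨fun n => Set.Iic ((n:ℚ):ℝ), fun n => Set.mem_iUnion.mpr ⟨n, rfl⟩, ?_⟩
      apply Set.eq_univ_of_forall; intro z
      obtain ⟨n, hn⟩ := exists_nat_ge z
      exact Set.mem_iUnion.mpr ⟨n, by simpa using hn⟩
    refine ext_of_generate_finite
      (Set.image2 (· ×ˢ ·) (⋃ q : ℚ, {Set.Iic (q:ℝ)}) (⋃ r : ℚ, {Set.Iic (r:ℝ)})) ?_ ?_ ?_ ?_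
    · exact (generateFrom_eq_prod hgenQ hgenQ hcsQ hcsQ).symm
    · exact Real.isPiSystem_Iic_rat.prod Real.isPiSystem_Iic_rat
    · rintro _ ⟨s1, hs1, s2, hs2, rfl⟩
      simp only [Set.mem_iUnion, Set.mem_singleton_iff] at hs1 hs2
      obtain ⟨q, rfl⟩ := hs1
      obtain ⟨r, rfl⟩ := hs2
      rw [Measure.prod_prod]
      exact hx q r
    · simp [measure_univ]
  -- disintegration of the joint law of (X, (Y, Z))
  haveI : IsProbabilityMeasure (μ.map fun ω => (X ω, W ω)) :=
    Measure.isProbabilityMeasure_map (hX.prodMk hWm).aemeasurable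
  have hdis : μ.map (fun ω => (X ω, W ω)) = (μ.map X) ⊗ₘ κW := by
    rw [hκW, condDistrib]
    conv_lhs => rw [← (μ.map fun ω => (X ω, W ω)).disintegrate (μ.map fun ω => (X ω, W ω)).condKernel]
    rw [Measure.fst_map_prodMk hWm]
  -- main rectangle computation
  haveI : IsProbabilityMeasure (μ.map fun ω => (F (X ω) (Y ω), G (X ω) (Z ω))) :=
    Measure.isProbabilityMeasure_map (hU.prodMk hV).aemeasurable
  have hgenR : MeasurableSpace.generateFrom (Set.range (Set.Iic : ℝ → Set ℝ))
      = Real.measurableSpace := by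
    rw [← borel_eq_generateFrom_Iic ℝ]
    exact (BorelSpace.measurable_eq (α := ℝ)).symm
  have hcsR : IsCountablySpanning (Set.range (Set.Iic : ℝ → Set ℝ)) := by
    refine ⟨fun n => Set.Iic (n:ℝ), fun n => Set.mem_range_self _, ?_⟩
    apply Set.eq_univ_of_forall; intro z
    obtain ⟨n, hn⟩ := exists_nat_ge z
    exact Set.mem_iUnion.mpr ⟨n, hn⟩
  refine ext_of_generate_finite
    (Set.image2 (· ×ˢ ·) (Set.range Set.Iic) (Set.range Set.Iic)) ?_ ?_ ?_ ?_
  · exact (generateFrom_eq_prod hgenR hgenR hcsR hcsR).symm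
  · exact isPiSystem_Iic.prod isPiSystem_Iic
  · rintro _ ⟨s1, ⟨a, rfl⟩, s2, ⟨b, rfl⟩, rfl⟩
    -- LHS: law of the pair on Iic a ×ˢ Iic b
    have hm1 : Measurable (fun p : E × (ℝ × ℝ) => F p.1 p.2.1) :=
      hFmeas.comp (measurable_fst.prodMk measurable_snd.fst)
    have hm2 : Measurable (fun p : E × (ℝ × ℝ) => G p.1 p.2.2) :=
      hGmeas.comp (measurable_fst.prodMk measurable_snd.snd)
    have hTmeas : MeasurableSet {p : E × (ℝ × ℝ) | F p.1 p.2.1 ≤ a ∧ G p.1 p.2.2 ≤ b} := by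
      have : {p : E × (ℝ × ℝ) | F p.1 p.2.1 ≤ a ∧ G p.1 p.2.2 ≤ b}
          = {p : E × (ℝ × ℝ) | F p.1 p.2.1 ≤ a} ∩ {p : E × (ℝ × ℝ) | G p.1 p.2.2 ≤ b} := rfl
      rw [this]
      exact (measurableSet_le hm1 measurable_const).inter
        (measurableSet_le hm2 measurable_const)
    -- rewrite the preimage
    have hpre2 : (fun ω => (F (X ω) (Y ω), G (X ω) (Z ω))) ⁻¹' (Set.Iic a ×ˢ Set.Iic b)
        = (fun ω => (X ω, W ω)) ⁻¹' {p : E × (ℝ × ℝ) | F p.1 p.2.1 ≤ a ∧ G p.1 p.2.2 ≤ b} := by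
      ext ω
      simp [Set.mem_preimage, Set.mem_prod, Set.mem_Iic, hW]
    rw [Measure.map_apply (hU.prodMk hV) (measurableSet_Iic.prod measurableSet_Iic), hpre2,
      ← Measure.map_apply (hX.prodMk hWm) hTmeas, hdis, Measure.compProd_apply hTmeas]
    have hsect : ∀ x : E, (Prod.mk x ⁻¹' {p : E × (ℝ × ℝ) | F p.1 p.2.1 ≤ a ∧ G p.1 p.2.2 ≤ b})
        = {y : ℝ | F x y ≤ a} ×ˢ {z : ℝ | G x z ≤ b} := by
      intro x
      ext w
      simp [Set.mem_prod]
    have hlint : ∫⁻ x, κW x (Prod.mk x ⁻¹' {p : E × (ℝ × ℝ) | F p.1 p.2.1 ≤ a ∧ G p.1 p.2.2 ≤ b})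
          ∂(μ.map X)
        = ∫⁻ _, ENNReal.ofReal (min a 1) * ENNReal.ofReal (min b 1) ∂(μ.map X) := by
      refine lintegral_congr_ae ?_
      filter_upwards [hA, hcontF, hcontG] with x hx hcF hcG
      rw [hsect x, hx, Measure.prod_prod]
      haveI : IsProbabilityMeasure (κY x) := inferInstance
      haveI : IsProbabilityMeasure (κZ x) := inferInstance
      have hFx : {y : ℝ | F x y ≤ a} = {y : ℝ | ((κY x) (Set.Iic y)).toReal ≤ a} := by
        ext y; rw [Set.mem_setOf_eq, Set.mem_setOf_eq, hF x y]
      have hGx : {z : ℝ | G x z ≤ b} = {z : ℝ | ((κZ x) (Set.Iic z)).toReal ≤ b} := by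
        ext z; rw [Set.mem_setOf_eq, Set.mem_setOf_eq, hG x z]
      have hcF' : Continuous (fun y => ((κY x) (Set.Iic y)).toReal) := by
        have : (fun y => ((κY x) (Set.Iic y)).toReal) = F x := by
          funext y; rw [hF x y]
        rw [this]; exact hcF
      have hcG' : Continuous (fun z => ((κZ x) (Set.Iic z)).toReal) := by
        have : (fun z => ((κZ x) (Set.Iic z)).toReal) = G x := by
          funext z; rw [hG x z]
        rw [this]; exact hcG
      rw [hFx, hGx, pit (κY x) hcF' a, pit (κZ x) hcG' b]
    rw [hlint, lintegral_const]
    have : (μ.map X) Set.univ = 1 := by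
      haveI : IsProbabilityMeasure (μ.map X) := Measure.isProbabilityMeasure_map hX.aemeasurable
      exact measure_univ
    rw [this, mul_one, Measure.prod_prod, hunif, unif_Iic a, unif_Iic b]
  · simp [measure_univ]


/-- Combining the partial copula property with the vanishing of centered association measures:
if `Y ⫫ Z | X` and `(U_i, V_i)`, `i = 1,…,r`, are i.i.d. copies of the partial copula
transforms `(U, V) = (F_{Y|X}(Y|X), G_{Z|X}(Z|X))`, then for square-integrable `s, t` with zero
mean under the uniform product measure, `θ = E[s(U₁,…,U_r) t(V₁,…,V_r)] = 0`. -/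
theorem partial_copula_stmt17
    {Ω E Ω' : Type*} [MeasurableSpace Ω] [StandardBorelSpace Ω] [MeasurableSpace E]
    [MeasurableSpace Ω']
    (μ : Measure Ω) [IsProbabilityMeasure μ]
    (μ' : Measure Ω') [IsProbabilityMeasure μ']
    (X : Ω → E) (Y Z : Ω → ℝ)
    (hX : Measurable X) (hY : Measurable Y) (hZ : Measurable Z)
    (F G : E → ℝ → ℝ)
    (hF : ∀ x y, F x y = ((condDistrib Y X μ) x (Set.Iic y)).toReal)
    (hG : ∀ x z, G x z = ((condDistrib Z X μ) x (Set.Iic z)).toReal)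
    (hcontF : ∀ᵐ x ∂(μ.map X), Continuous (F x))
    (hcontG : ∀ᵐ x ∂(μ.map X), Continuous (G x))
    (hCI : CondIndepFun (MeasurableSpace.comap X inferInstance) hX.comap_le Y Z μ)
    (r : ℕ) (Us Vs : Fin r → Ω' → ℝ)
    (hUs : ∀ i, Measurable (Us i)) (hVs : ∀ i, Measurable (Vs i))
    (hiid : iIndepFun (fun i ω => (Us i ω, Vs i ω)) μ')
    (hident : ∀ i, μ'.map (fun ω => (Us i ω, Vs i ω)) =
        μ.map (fun ω => (F (X ω) (Y ω), G (X ω) (Z ω))))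
    (s t : (Fin r → ℝ) → ℝ) (hs : Measurable s) (ht : Measurable t)
    (hs2 : MemLp s 2 (Measure.pi fun _ : Fin r => volume.restrict (Set.Icc 0 1)))
    (ht2 : MemLp t 2 (Measure.pi fun _ : Fin r => volume.restrict (Set.Icc 0 1)))
    (hs0 : ∫ u, s u ∂(Measure.pi fun _ : Fin r => volume.restrict (Set.Icc 0 1)) = 0)
    (ht0 : ∫ v, t v ∂(Measure.pi fun _ : Fin r => volume.restrict (Set.Icc 0 1)) = 0) :
    ∫ ω, s (fun i => Us i ω) * t (fun i => Vs i ω) ∂μ' = 0 := by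
  haveI hunifP : IsProbabilityMeasure (volume.restrict (Set.Icc (0:ℝ) 1)) := by
    constructor
    rw [Measure.restrict_apply_univ, Real.volume_Icc]
    norm_num
  set unif : Measure ℝ := volume.restrict (Set.Icc 0 1) with hunif
  set π : Measure (Fin r → ℝ) := Measure.pi fun _ : Fin r => unif with hπ
  haveI : IsProbabilityMeasure π := by rw [hπ]; infer_instance
  have hpairlaw : ∀ i, μ'.map (fun ω => (Us i ω, Vs i ω)) = unif.prod unif := fun i =>
    (hident i).trans (partial_copula_law μ X Y Z hX hY hZ F G hF hG hcontF hcontG hCI)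
  set Φ : Ω' → (Fin r → ℝ) × (Fin r → ℝ) :=
    fun ω => ((fun i => Us i ω), (fun i => Vs i ω)) with hΦ
  have hΦm : Measurable Φ :=
    (measurable_pi_lambda _ hUs).prodMk (measurable_pi_lambda _ hVs)
  -- law of the sample vector
  have hlaw : μ'.map Φ = π.prod π := by
    haveI : IsProbabilityMeasure (μ'.map Φ) := Measure.isProbabilityMeasure_map hΦm.aemeasurable
    have hcs : IsCountablySpanning
        (Set.pi Set.univ '' Set.pi Set.univ fun _ : Fin r => {s : Set ℝ | MeasurableSet s}) := by
      refine ⟨fun _ => Set.univ, fun n => ⟨fun _ => Set.univ, by simp, by simp⟩, by simp [Set.iUnion_const]⟩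
    refine ext_of_generate_finite
      (Set.image2 (· ×ˢ ·)
        (Set.pi Set.univ '' Set.pi Set.univ fun _ : Fin r => {s : Set ℝ | MeasurableSet s})
        (Set.pi Set.univ '' Set.pi Set.univ fun _ : Fin r => {s : Set ℝ | MeasurableSet s}))
      ?_ ?_ ?_ ?_
    · exact (generateFrom_eq_prod generateFrom_pi generateFrom_pi hcs hcs).symm
    · exact isPiSystem_pi.prod isPiSystem_pi
    · rintro _ ⟨_, ⟨A, hA, rfl⟩, _, ⟨B, hB, rfl⟩, rfl⟩
      simp only [Set.mem_pi, Set.mem_univ, forall_true_left, Set.mem_setOf_eq] at hA hB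
      have hArect : MeasurableSet (Set.pi Set.univ A) := MeasurableSet.univ_pi fun i => hA i
      have hBrect : MeasurableSet (Set.pi Set.univ B) := MeasurableSet.univ_pi fun i => hB i
      rw [Measure.map_apply hΦm (hArect.prod hBrect), Measure.prod_prod, hπ,
        Measure.pi_pi, Measure.pi_pi]
      have hpre : Φ ⁻¹' (Set.pi Set.univ A ×ˢ Set.pi Set.univ B)
          = ⋂ i, (fun ω => (Us i ω, Vs i ω)) ⁻¹' (A i ×ˢ B i) := by
        ext ω
        simp only [hΦ, Set.mem_preimage, Set.mem_prod, Set.mem_pi, Set.mem_univ,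
          forall_true_left, Set.mem_iInter]
        constructor
        · rintro ⟨h1, h2⟩ i; exact ⟨h1 i, h2 i⟩
        · intro h; exact ⟨fun i => (h i).1, fun i => (h i).2⟩
      rw [hpre]
      have hinter := hiid.measure_inter_preimage_eq_mul (sets := fun i => A i ×ˢ B i)
        Finset.univ (fun i _ => (hA i).prod (hB i))
      rw [show (⋂ i, (fun ω => (Us i ω, Vs i ω)) ⁻¹' (A i ×ˢ B i))
          = ⋂ i ∈ Finset.univ, (fun ω => (Us i ω, Vs i ω)) ⁻¹' (A i ×ˢ B i) by simp, hinter]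
      have hterm : ∀ i : Fin r, μ' ((fun ω => (Us i ω, Vs i ω)) ⁻¹' (A i ×ˢ B i))
          = unif (A i) * unif (B i) := by
        intro i
        rw [← Measure.map_apply ((hUs i).prodMk (hVs i)) ((hA i).prod (hB i)),
          hpairlaw i, Measure.prod_prod]
      calc ∏ i : Fin r, μ' ((fun ω => (Us i ω, Vs i ω)) ⁻¹' (A i ×ˢ B i))
          = ∏ i : Fin r, unif (A i) * unif (B i) := Finset.prod_congr rfl fun i _ => hterm i
        _ = (∏ i : Fin r, unif (A i)) * ∏ i : Fin r, unif (B i) := Finset.prod_mul_distrib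
    · simp [measure_univ]
  -- final computation
  have hint : ∫ ω, s (fun i => Us i ω) * t (fun i => Vs i ω) ∂μ'
      = ∫ p : (Fin r → ℝ) × (Fin r → ℝ), s p.1 * t p.2 ∂(μ'.map Φ) := by
    rw [integral_map hΦm.aemeasurable]
    exact ((hs.comp measurable_fst).mul (ht.comp measurable_snd)).aestronglyMeasurable
  rw [hint, hlaw, integral_prod_mul s t]
  rw [hπ, hunif] at *
  rw [show (∫ u, s u ∂(Measure.pi fun _ : Fin r => volume.restrict (Set.Icc 0 1))) = 0 from hs0]
  ring
end
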